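/- arXiv:2408.12951 — 3 statements merged into one kernel-verified Lean document; each statement's English description precedes it below -/
import Mathlib

section
/- Let k ≥ 2 and let G be a thick spider: a graph with vertices c_1,…,c_k forming a clique and s_1,…,s_k forming an independent set, where s_i is adjacent to c_j if and only if i ≠ j, possibly together with one additional vertex c_0 adjacent to all of c_1,…,c_k and to none of s_1,…,s_k. Then b*(G) = ω(G). -/
variable {V : Type*} {W : Type*}

/-- A proper coloring of `G` using colors `{1, …, k}`: colors lie in `{1,…,k}`,
adjacent vertices get different colors, and every color in `{1,…,k}` is used. -/
def IsProperKColoring (G : SimpleGraph V) (k : ℕ) (c : V → ℕ) : Prop :=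
  (∀ v, c v ∈ Set.Icc 1 k) ∧
  (∀ u v, G.Adj u v → c u ≠ c v) ∧
  (∀ j ∈ Set.Icc 1 k, ∃ v, c v = j)

/-- `u` is a b-vertex: every color `j ∈ {1,…,k}` with `j ≠ c u` appears on a neighbor of `u`. -/
def IsBVertex (G : SimpleGraph V) (k : ℕ) (c : V → ℕ) (u : V) : Prop :=
  ∀ j ∈ Set.Icc 1 k, j ≠ c u → ∃ w, G.Adj u w ∧ c w = j

/-- `u` is a nice vertex: it is a b-vertex and for every color `j ≠ c u` in `{1,…,k}`
it has a b-vertex neighbor of color `j`. -/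
def IsNiceVertex (G : SimpleGraph V) (k : ℕ) (c : V → ℕ) (u : V) : Prop :=
  IsBVertex G k c u ∧
  ∀ j ∈ Set.Icc 1 k, j ≠ c u → ∃ w, G.Adj u w ∧ c w = j ∧ IsBVertex G k c w

/-- A Grundy coloring using `k` colors: proper, and every vertex of color `j` has a
neighbor of each smaller color `i ≥ 1`. -/
def IsGrundyColoring (G : SimpleGraph V) (k : ℕ) (c : V → ℕ) : Prop :=
  IsProperKColoring G k c ∧
  ∀ i j : ℕ, 1 ≤ i → i < j → j ≤ k → ∀ v, c v = j → ∃ w, G.Adj v w ∧ c w = i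

/-- A z-coloring: a Grundy coloring with a nice vertex of (top) color `k`. -/
def IsZColoring (G : SimpleGraph V) (k : ℕ) (c : V → ℕ) : Prop :=
  IsGrundyColoring G k c ∧ ∃ u, c u = k ∧ IsNiceVertex G k c u

/-- A b*-coloring: a proper coloring with a nice vertex of (top) color `k`. -/
def IsBStarColoring (G : SimpleGraph V) (k : ℕ) (c : V → ℕ) : Prop :=
  IsProperKColoring G k c ∧ ∃ u, c u = k ∧ IsNiceVertex G k c u

/-- The z-chromatic number: largest `k` admitting a z-coloring with `k` colors. -/
noncomputable def zNum (G : SimpleGraph V) : ℕ :=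
  sSup {k | ∃ c : V → ℕ, IsZColoring G k c}

/-- The b*-chromatic number: largest `k` admitting a b*-coloring with `k` colors. -/
noncomputable def bStar (G : SimpleGraph V) : ℕ :=
  sSup {k | ∃ c : V → ℕ, IsBStarColoring G k c}

/-- `m*(G)`: the largest `k` such that some vertex `u` has `k` distinct neighbors,
each of degree at least `k`. -/
noncomputable def mStar (G : SimpleGraph V) : ℕ :=
  sSup {k | ∃ (u : V) (s : Finset V), (↑s : Set V) ⊆ G.neighborSet u ∧ s.card = k ∧
    ∀ v ∈ s, k ≤ (G.neighborSet v).ncard}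

/-- The clique number `ω(G)`. -/
noncomputable def omegaNum (G : SimpleGraph V) : ℕ :=
  sSup {n | ∃ s : Finset V, G.IsNClique n s}
/-- The thick spider with clique `c_1,…,c_k` (the `Sum.inl` vertices), independent set
`s_1,…,s_k` (the `Sum.inr ∘ Sum.inl` vertices) where `s_i ~ c_j ↔ i ≠ j`, and, when
`hasHead = true`, a head `c_0` (the `Sum.inr ∘ Sum.inr` vertex) adjacent exactly to
`c_1,…,c_k`. -/
def thickSpider (k : ℕ) (hasHead : Bool) :
    SimpleGraph (Fin k ⊕ (Fin k ⊕ Fin (cond hasHead 1 0))) :=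
  SimpleGraph.fromRel fun x y =>
    match x, y with
    | Sum.inl _, Sum.inl _ => True
    | Sum.inl i, Sum.inr (Sum.inl j) => i ≠ j
    | Sum.inl _, Sum.inr (Sum.inr _) => True
    | _, _ => False


section Aux

/-- A natural-number `sSup` computation. -/
lemma natSSup_eq {S : Set ℕ} {m : ℕ} (hm : m ∈ S) (hub : ∀ x ∈ S, x ≤ m) :
    sSup S = m :=
  le_antisymm (csSup_le ⟨m, hm⟩ hub) (le_csSup ⟨m, fun x hx => hub x hx⟩ hm)

/-- Counting bound for b-vertices: if all neighbors of a b-vertex lie in `N`,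
then `t ≤ N.card + 1`. -/
lemma bvertex_card_bound {V : Type*} {G : SimpleGraph V} {t : ℕ} {c : V → ℕ}
    (hp : ∀ v, c v ∈ Set.Icc 1 t) {w : V} (hb : IsBVertex G t c w)
    {N : Finset V} (hN : ∀ x, G.Adj w x → x ∈ N) : t ≤ N.card + 1 := by
  have hsub : (Finset.Icc 1 t).erase (c w) ⊆ N.image c := by
    intro j hj
    obtain ⟨hne, hmem⟩ := Finset.mem_erase.mp hj
    rw [Finset.mem_Icc] at hmem
    obtain ⟨x, hadj, hcx⟩ := hb j ⟨hmem.1, hmem.2⟩ hne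
    exact Finset.mem_image.mpr ⟨x, hN x hadj, hcx⟩
  have h1 := Finset.card_le_card hsub
  have h2 := Finset.card_image_le (s := N) (f := c)
  have hcw : c w ∈ Finset.Icc 1 t := by
    have := hp w
    rw [Set.mem_Icc] at this
    exact Finset.mem_Icc.mpr this
  rw [Finset.card_erase_of_mem hcw, Nat.card_Icc] at h1
  omega

variable {k : ℕ} {hh : Bool}

lemma bvertex_leg {t : ℕ} {c : Fin k ⊕ (Fin k ⊕ Fin (cond hh 1 0)) → ℕ}
    (hp : ∀ v, c v ∈ Set.Icc 1 t) {i : Fin k}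
    (hb : IsBVertex (thickSpider k hh) t c (Sum.inr (Sum.inl i))) : t ≤ k := by
  have hN : ∀ x, (thickSpider k hh).Adj (Sum.inr (Sum.inl i)) x →
      x ∈ (Finset.univ.erase i).image (Sum.inl : Fin k → Fin k ⊕ (Fin k ⊕ Fin (cond hh 1 0))) := by
    rintro (b | (j | z)) hadj
    · simp only [thickSpider] at hadj
      simp only [SimpleGraph.fromRel_adj] at hadj
      have hbi : b ≠ i := by
        rcases hadj.2 with h' | h'
        · exact absurd h' (by simp)
        · exact h'
      exact Finset.mem_image.mpr ⟨b, Finset.mem_erase.mpr ⟨hbi, Finset.mem_univ b⟩, rfl⟩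
    · simp [thickSpider] at hadj
    · simp [thickSpider] at hadj
  have := bvertex_card_bound hp hb hN
  have hc1 : ((Finset.univ.erase i).image
      (Sum.inl : Fin k → Fin k ⊕ (Fin k ⊕ Fin (cond hh 1 0)))).card ≤ k - 1 := by
    calc _ ≤ (Finset.univ.erase i).card := Finset.card_image_le
    _ = k - 1 := by rw [Finset.card_erase_of_mem (Finset.mem_univ i)]; simp
  have hk1 := i.isLt
  omega

lemma bvertex_head {t : ℕ} {c : Fin k ⊕ (Fin k ⊕ Fin (cond hh 1 0)) → ℕ}
    (hp : ∀ v, c v ∈ Set.Icc 1 t) {z : Fin (cond hh 1 0)}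
    (hb : IsBVertex (thickSpider k hh) t c (Sum.inr (Sum.inr z))) : t ≤ k + 1 := by
  have hN : ∀ x, (thickSpider k hh).Adj (Sum.inr (Sum.inr z)) x →
      x ∈ Finset.univ.image (Sum.inl : Fin k → Fin k ⊕ (Fin k ⊕ Fin (cond hh 1 0))) := by
    rintro (b | (j | w)) hadj
    · exact Finset.mem_image.mpr ⟨b, Finset.mem_univ b, rfl⟩
    · simp [thickSpider] at hadj
    · simp [thickSpider] at hadj
  have := bvertex_card_bound hp hb hN
  have : (Finset.univ.image (Sum.inl : Fin k → Fin k ⊕ (Fin k ⊕ Fin (cond hh 1 0)))).card ≤ k := by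
    calc _ ≤ (Finset.univ : Finset (Fin k)).card := Finset.card_image_le
    _ = k := by simp
  omega

/-- Upper bound: any b*-coloring of the thick spider uses at most `k + h` colors. -/
lemma bstar_upper (hk : 2 ≤ k) {t : ℕ} {c : Fin k ⊕ (Fin k ⊕ Fin (cond hh 1 0)) → ℕ}
    (h : IsBStarColoring (thickSpider k hh) t c) : t ≤ k + cond hh 1 0 := by
  obtain ⟨hp, u, hcu, hbu, hnice⟩ := h
  have hp1 := hp.1
  by_contra hcon
  push_neg at hcon
  rcases u with a | (i | z)
  · -- nice vertex is some c_a; all its b-vertex neighbors of other colors are also inl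
    have ht1 : 1 ≤ t := by
      have := hp1 (Sum.inl a); rw [Set.mem_Icc, hcu] at this; exact this.1
    have hsub : (Finset.Icc 1 t).erase t ⊆
        ((Finset.univ.erase a).image (Sum.inl : Fin k → Fin k ⊕ (Fin k ⊕ Fin (cond hh 1 0)))).image c := by
      intro j hj
      obtain ⟨hne, hmem⟩ := Finset.mem_erase.mp hj
      rw [Finset.mem_Icc] at hmem
      obtain ⟨w, hadj, hcw, hbw⟩ := hnice j ⟨hmem.1, hmem.2⟩ (by rw [hcu]; exact hne)
      rcases w with b | (i | z)
      · have hab : a ≠ b := by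
          simp only [thickSpider, SimpleGraph.fromRel_adj] at hadj
          intro hEq; exact hadj.1 (by rw [hEq])
        exact Finset.mem_image.mpr ⟨Sum.inl b,
          Finset.mem_image.mpr ⟨b, Finset.mem_erase.mpr ⟨fun h => hab h.symm, Finset.mem_univ b⟩, rfl⟩, hcw⟩
      · exact absurd (bvertex_leg hp1 hbw) (by omega)
      · have := bvertex_head hp1 hbw
        have := z.isLt
        omega
    have h1 := Finset.card_le_card hsub
    have h2 := Finset.card_image_le
      (s := (Finset.univ.erase a).image (Sum.inl : Fin k → Fin k ⊕ (Fin k ⊕ Fin (cond hh 1 0)))) (f := c)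
    have h3 := Finset.card_image_le (s := Finset.univ.erase a)
      (f := (Sum.inl : Fin k → Fin k ⊕ (Fin k ⊕ Fin (cond hh 1 0))))
    have h4 : (Finset.univ.erase a).card = k - 1 := by
      rw [Finset.card_erase_of_mem (Finset.mem_univ a)]; simp
    have h5 : t ∈ Finset.Icc 1 t := Finset.mem_Icc.mpr ⟨ht1, le_refl t⟩
    rw [Finset.card_erase_of_mem h5, Nat.card_Icc] at h1
    omega
  · exact absurd (bvertex_leg hp1 hbu) (by omega)
  · have := bvertex_head hp1 hbu
    have := z.isLt
    omega

/-- Upper bound for cliques. -/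
lemma clique_upper (n : ℕ) {s : Finset (Fin k ⊕ (Fin k ⊕ Fin (cond hh 1 0)))}
    (hs : (thickSpider k hh).IsNClique n s) : n ≤ k + cond hh 1 0 := by
  obtain ⟨hcl, hcard⟩ := hs
  by_cases hleg : ∃ i : Fin k, Sum.inr (Sum.inl i) ∈ s
  · obtain ⟨i, hi⟩ := hleg
    have hsub : s ⊆ insert (Sum.inr (Sum.inl i))
        ((Finset.univ.erase i).image (Sum.inl : Fin k → Fin k ⊕ (Fin k ⊕ Fin (cond hh 1 0)))) := by
      rintro (b | (j | z)) hx
      · have hne : (Sum.inl b : Fin k ⊕ (Fin k ⊕ Fin (cond hh 1 0))) ≠ Sum.inr (Sum.inl i) := by simp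
        have hadj := hcl hx hi hne
        have hbi : b ≠ i := by
          simp only [thickSpider, SimpleGraph.fromRel_adj] at hadj
          rcases hadj.2 with h' | h'
          · exact h'
          · exact absurd h' (by simp)
        exact Finset.mem_insert.mpr (Or.inr
          (Finset.mem_image.mpr ⟨b, Finset.mem_erase.mpr ⟨hbi, Finset.mem_univ b⟩, rfl⟩))
      · by_cases hji : j = i
        · subst hji; exact Finset.mem_insert_self _ _
        · have hne : (Sum.inr (Sum.inl j) : Fin k ⊕ (Fin k ⊕ Fin (cond hh 1 0))) ≠
              Sum.inr (Sum.inl i) := by simp [hji]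
          have hadj := hcl hx hi hne
          simp [thickSpider] at hadj
      · have hne : (Sum.inr (Sum.inr z) : Fin k ⊕ (Fin k ⊕ Fin (cond hh 1 0))) ≠
            Sum.inr (Sum.inl i) := by simp
        have hadj := hcl hx hi hne
        simp [thickSpider] at hadj
    have h1 := Finset.card_le_card hsub
    have h2 := Finset.card_insert_le (Sum.inr (Sum.inl i) : Fin k ⊕ (Fin k ⊕ Fin (cond hh 1 0)))
      ((Finset.univ.erase i).image Sum.inl)
    have h3 := Finset.card_image_le (s := Finset.univ.erase i)
      (f := (Sum.inl : Fin k → Fin k ⊕ (Fin k ⊕ Fin (cond hh 1 0))))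
    have h4 : (Finset.univ.erase i).card = k - 1 := by
      rw [Finset.card_erase_of_mem (Finset.mem_univ i)]; simp
    have hk1 := i.isLt
    omega
  · push_neg at hleg
    have hsub : s ⊆ Finset.univ.image (Sum.inl : Fin k → Fin k ⊕ (Fin k ⊕ Fin (cond hh 1 0))) ∪
        Finset.univ.image (fun z : Fin (cond hh 1 0) => (Sum.inr (Sum.inr z) :
          Fin k ⊕ (Fin k ⊕ Fin (cond hh 1 0)))) := by
      rintro (b | (j | z)) hx
      · exact Finset.mem_union_left _ (Finset.mem_image.mpr ⟨b, Finset.mem_univ b, rfl⟩)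
      · exact absurd hx (hleg j)
      · exact Finset.mem_union_right _ (Finset.mem_image.mpr ⟨z, Finset.mem_univ z, rfl⟩)
    have h1 := Finset.card_le_card hsub
    have h2 := Finset.card_union_le
      (Finset.univ.image (Sum.inl : Fin k → Fin k ⊕ (Fin k ⊕ Fin (cond hh 1 0))))
      (Finset.univ.image (fun z : Fin (cond hh 1 0) => (Sum.inr (Sum.inr z) :
          Fin k ⊕ (Fin k ⊕ Fin (cond hh 1 0)))))
    have h3 : (Finset.univ.image (Sum.inl : Fin k → Fin k ⊕ (Fin k ⊕ Fin (cond hh 1 0)))).card ≤ k := by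
      calc _ ≤ (Finset.univ : Finset (Fin k)).card := Finset.card_image_le
      _ = k := by simp
    have h4 : (Finset.univ.image (fun z : Fin (cond hh 1 0) => (Sum.inr (Sum.inr z) :
        Fin k ⊕ (Fin k ⊕ Fin (cond hh 1 0))))).card ≤ cond hh 1 0 := by
      calc _ ≤ (Finset.univ : Finset (Fin (cond hh 1 0))).card := Finset.card_image_le
      _ = cond hh 1 0 := by simp
    omega

end Aux

section Constructions

variable {k : ℕ}

/-- The coloring of the headless thick spider: `c_i` and `s_i` get color `i+1`. -/
def spiderColF (k : ℕ) : Fin k ⊕ (Fin k ⊕ Fin 0) → ℕ :=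
  Sum.elim (fun i => (i : ℕ) + 1) (Sum.elim (fun i => (i : ℕ) + 1) (fun z => z.elim0))

/-- The coloring of the headed thick spider: head gets color `k+1`. -/
def spiderColT (k : ℕ) : Fin k ⊕ (Fin k ⊕ Fin 1) → ℕ :=
  Sum.elim (fun i => (i : ℕ) + 1) (Sum.elim (fun i => (i : ℕ) + 1) (fun _ => k + 1))

lemma bvxF (a : Fin k) : IsBVertex (thickSpider k false) k (spiderColF k) (Sum.inl a) := by
  intro j hj hne
  rw [Set.mem_Icc] at hj
  simp only [spiderColF, Sum.elim_inl] at hne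
  refine ⟨Sum.inl ⟨j - 1, by omega⟩, ?_, ?_⟩
  · simp only [thickSpider, SimpleGraph.fromRel_adj]
    constructor
    · simp only [ne_eq, Sum.inl.injEq, Fin.ext_iff]
      omega
    · exact Or.inl trivial
  · simp only [spiderColF, Sum.elim_inl]
    omega

lemma constrF (hk : 2 ≤ k) : IsBStarColoring (thickSpider k false) k (spiderColF k) := by
  refine ⟨⟨?_, ?_, ?_⟩, ?_⟩
  · rintro (a | (i | z))
    · have := a.isLt; simp only [spiderColF, Sum.elim_inl, Set.mem_Icc]; omega
    · have := i.isLt; simp only [spiderColF, Sum.elim_inr, Sum.elim_inl, Set.mem_Icc]; omega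
    · exact z.elim0
  · rintro (a | (i | z)) (b | (j | w)) hadj <;>
      first
      | exact z.elim0
      | exact w.elim0
      | (simp only [thickSpider, SimpleGraph.fromRel_adj, ne_eq, Sum.inl.injEq, Sum.inr.injEq,
          false_or, or_false, or_self, and_true, and_false, Fin.ext_iff] at hadj <;>
         simp only [spiderColF, Sum.elim_inl, Sum.elim_inr] <;> omega)
  · intro j hj
    rw [Set.mem_Icc] at hj
    exact ⟨Sum.inl ⟨j - 1, by omega⟩, by simp only [spiderColF, Sum.elim_inl]; omega⟩
  · refine ⟨Sum.inl ⟨k - 1, by omega⟩, by simp only [spiderColF, Sum.elim_inl]; omega, bvxF _, ?_⟩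
    intro j hj hne
    rw [Set.mem_Icc] at hj
    simp only [spiderColF, Sum.elim_inl] at hne
    refine ⟨Sum.inl ⟨j - 1, by omega⟩, ?_, ?_, bvxF _⟩
    · simp only [thickSpider, SimpleGraph.fromRel_adj]
      exact ⟨by simp only [ne_eq, Sum.inl.injEq, Fin.ext_iff]; omega, Or.inl trivial⟩
    · simp only [spiderColF, Sum.elim_inl]; omega

lemma bvxT_inl (hk : 2 ≤ k) (a : Fin k) :
    IsBVertex (thickSpider k true) (k + 1) (spiderColT k) (Sum.inl a) := by
  intro j hj hne
  rw [Set.mem_Icc] at hj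
  simp only [spiderColT, Sum.elim_inl] at hne
  by_cases hjk : j ≤ k
  · refine ⟨Sum.inl ⟨j - 1, by omega⟩, ?_, ?_⟩
    · simp only [thickSpider, SimpleGraph.fromRel_adj]
      exact ⟨by simp only [ne_eq, Sum.inl.injEq, Fin.ext_iff]; omega, Or.inl trivial⟩
    · simp only [spiderColT, Sum.elim_inl]; omega
  · refine ⟨Sum.inr (Sum.inr ⟨0, Nat.zero_lt_one⟩), ?_, ?_⟩
    · simp [thickSpider]
    · simp only [spiderColT, Sum.elim_inr]; omega

lemma bvxT_head (hk : 2 ≤ k) :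
    IsBVertex (thickSpider k true) (k + 1) (spiderColT k) (Sum.inr (Sum.inr ⟨0, Nat.zero_lt_one⟩)) := by
  intro j hj hne
  rw [Set.mem_Icc] at hj
  simp only [spiderColT, Sum.elim_inr] at hne
  refine ⟨Sum.inl ⟨j - 1, by omega⟩, ?_, ?_⟩
  · simp [thickSpider]
  · simp only [spiderColT, Sum.elim_inl]; omega

lemma constrT (hk : 2 ≤ k) : IsBStarColoring (thickSpider k true) (k + 1) (spiderColT k) := by
  refine ⟨⟨?_, ?_, ?_⟩, ?_⟩
  · rintro (a | (i | z))
    · have := a.isLt; simp only [spiderColT, Sum.elim_inl, Set.mem_Icc]; omega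
    · have := i.isLt; simp only [spiderColT, Sum.elim_inr, Sum.elim_inl, Set.mem_Icc]; omega
    · simp only [spiderColT, Sum.elim_inr, Set.mem_Icc]; omega
  · rintro (a | (i | z)) (b | (j | w)) hadj <;>
      (first
      | (simp only [thickSpider, SimpleGraph.fromRel_adj, ne_eq, Sum.inl.injEq, Sum.inr.injEq,
          false_or, or_false, or_self, and_true, and_false, Fin.ext_iff] at hadj) | skip) <;>
      (have ha := fun (x : Fin k) => x.isLt) <;>
      simp only [spiderColT, Sum.elim_inl, Sum.elim_inr] <;>
      first
      | (have := a.isLt; omega)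
      | (have := b.isLt; omega)
      | omega
  · intro j hj
    rw [Set.mem_Icc] at hj
    by_cases hjk : j ≤ k
    · exact ⟨Sum.inl ⟨j - 1, by omega⟩, by simp only [spiderColT, Sum.elim_inl]; omega⟩
    · exact ⟨Sum.inr (Sum.inr ⟨0, Nat.zero_lt_one⟩), by simp only [spiderColT, Sum.elim_inr]; omega⟩
  · refine ⟨Sum.inr (Sum.inr ⟨0, Nat.zero_lt_one⟩), rfl, bvxT_head hk, ?_⟩
    intro j hj hne
    rw [Set.mem_Icc] at hj
    simp only [spiderColT, Sum.elim_inr] at hne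
    refine ⟨Sum.inl ⟨j - 1, by omega⟩, ?_, ?_, bvxT_inl hk _⟩
    · simp [thickSpider]
    · simp only [spiderColT, Sum.elim_inl]; omega

lemma cliqueF : (thickSpider k false).IsNClique k
    (Finset.univ.image (Sum.inl : Fin k → Fin k ⊕ (Fin k ⊕ Fin 0))) := by
  constructor
  · intro x hx y hy hxy
    simp only [Finset.coe_image, Finset.coe_univ, Set.image_univ, Set.mem_range] at hx hy
    obtain ⟨a, rfl⟩ := hx
    obtain ⟨b, rfl⟩ := hy
    simp only [thickSpider, SimpleGraph.fromRel_adj]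
    exact ⟨hxy, Or.inl trivial⟩
  · rw [Finset.card_image_of_injective _ Sum.inl_injective]; simp

lemma cliqueT : (thickSpider k true).IsNClique (k + 1)
    (insert (Sum.inr (Sum.inr ⟨0, Nat.zero_lt_one⟩))
      (Finset.univ.image (Sum.inl : Fin k → Fin k ⊕ (Fin k ⊕ Fin 1)))) := by
  constructor
  · intro x hx y hy hxy
    simp only [Finset.coe_insert, Set.mem_insert_iff, Finset.coe_image, Finset.coe_univ,
      Set.image_univ, Set.mem_range] at hx hy
    rcases hx with rfl | ⟨a, rfl⟩ <;> rcases hy with rfl | ⟨b, rfl⟩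
    · exact absurd rfl hxy
    · simp only [thickSpider, SimpleGraph.fromRel_adj]
      exact ⟨hxy, Or.inr trivial⟩
    · simp only [thickSpider, SimpleGraph.fromRel_adj]
      exact ⟨hxy, Or.inl trivial⟩
    · simp only [thickSpider, SimpleGraph.fromRel_adj]
      exact ⟨hxy, Or.inl trivial⟩
  · rw [Finset.card_insert_of_notMem (by simp),
      Finset.card_image_of_injective _ Sum.inl_injective]
    simp

end Constructions

/-- for `k ≥ 2`, the b*-chromatic number of a thick spider (with or
without head) equals its clique number. -/
theorem thickSpider_bStar_eq_omega (k : ℕ) (hk : 2 ≤ k) (hasHead : Bool) :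
    bStar (thickSpider k hasHead) = omegaNum (thickSpider k hasHead) := by
  cases hasHead
  · have h1 : bStar (thickSpider k false) = k := by
      apply natSSup_eq
      · exact ⟨spiderColF k, constrF hk⟩
      · rintro t ⟨c, hc⟩; simpa using bstar_upper hk hc
    have h2 : omegaNum (thickSpider k false) = k := by
      apply natSSup_eq
      · exact ⟨_, cliqueF⟩
      · rintro n ⟨s, hs⟩; simpa using clique_upper n hs
    rw [h1, h2]
  · have h1 : bStar (thickSpider k true) = k + 1 := by
      apply natSSup_eq
      · exact ⟨spiderColT k, constrT hk⟩
      · rintro t ⟨c, hc⟩; simpa using bstar_upper hk hc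
    have h2 : omegaNum (thickSpider k true) = k + 1 := by
      apply natSSup_eq
      · exact ⟨_, cliqueT⟩
      · rintro n ⟨s, hs⟩; simpa using clique_upper n hs
    rw [h1, h2]
end

section
/- For every finite simple graph G with at least one vertex, z(G) ≤ max_{u ∈ V(G)} z(G⁺(u)), where G⁺(u) is the subgraph of G induced by the ball B(u, deg(u)+1) of radius deg(u)+1 centered at u. Moreover, if G is z-monotonic then z(G) = max_{u ∈ V(G)} z(G⁺(u)). -/
variable {V : Type*} {W : Type*}

/-- The ball of radius `r` centered at `u`: vertices at graph distance at most `r`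
from `u` (i.e. joined to `u` by a walk of length at most `r`). -/
def ball (G : SimpleGraph V) (u : V) (r : ℕ) : Set V :=
  {v | ∃ p : G.Walk u v, p.length ≤ r}
attribute [local instance 10] Classical.propDecidable

noncomputable def zgreedy (H : SimpleGraph W) [Fintype W] (c : W → ℕ) (v : W) : ℕ :=
  sInf {m | 1 ≤ m ∧ m ∉ ((Finset.univ.filter fun w => H.Adj v w ∧ c w < c v).attach.image
      fun w => zgreedy H c w.1)}
termination_by c v
decreasing_by
  exact (Finset.mem_filter.mp w.2).2.2

section greedy
variable (H : SimpleGraph W) [Fintype W] (c : W → ℕ)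

lemma zgreedy_mem (v : W) :
    zgreedy H c v ∈ {m | 1 ≤ m ∧ m ∉ ((Finset.univ.filter fun w => H.Adj v w ∧ c w < c v).attach.image
      fun w => zgreedy H c w.1)} := by
  rw [zgreedy]
  apply Nat.sInf_mem
  refine ⟨((Finset.univ.filter fun w => H.Adj v w ∧ c w < c v).attach.image
      fun w => zgreedy H c w.1).sup id + 1, by omega, fun h => ?_⟩
  have := Finset.le_sup (f := id) h
  simp only [id] at this
  omega

lemma zgreedy_pos (v : W) : 1 ≤ zgreedy H c v := (zgreedy_mem H c v).1

lemma zgreedy_not_prev (v w : W) (ha : H.Adj v w) (hlt : c w < c v) :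
    zgreedy H c w ≠ zgreedy H c v := by
  intro h
  apply (zgreedy_mem H c v).2
  exact Finset.mem_image.mpr ⟨⟨w, Finset.mem_filter.mpr ⟨Finset.mem_univ _, ha, hlt⟩⟩,
    Finset.mem_attach _ _, h⟩

lemma zgreedy_lt_exists (v : W) (i : ℕ) (h1 : 1 ≤ i) (hi : i < zgreedy H c v) :
    ∃ w, H.Adj v w ∧ c w < c v ∧ zgreedy H c w = i := by
  have : i ∉ {m | 1 ≤ m ∧ m ∉ ((Finset.univ.filter fun w => H.Adj v w ∧ c w < c v).attach.image
      fun w => zgreedy H c w.1)} := by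
    rw [zgreedy] at hi
    exact Nat.notMem_of_lt_sInf hi
  simp only [Set.mem_setOf_eq, not_and, not_not] at this
  obtain ⟨w, -, hw⟩ := Finset.mem_image.mp (this h1)
  exact ⟨w.1, (Finset.mem_filter.mp w.2).2.1, (Finset.mem_filter.mp w.2).2.2, hw⟩

lemma zgreedy_le (hc : ∀ w, 1 ≤ c w) : ∀ n (v : W), c v = n → zgreedy H c v ≤ c v := by
  intro n
  induction n using Nat.strong_induction_on with
  | _ n ih =>
    intro v hv
    rw [zgreedy]
    apply Nat.sInf_le
    refine ⟨hc v, fun h => ?_⟩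
    obtain ⟨w, -, hw⟩ := Finset.mem_image.mp h
    have h2 := (Finset.mem_filter.mp w.2).2.2
    have := ih (c w.1) (hv ▸ h2) w.1 rfl
    omega

/-- Any z-coloring has at most `Fintype.card` colors. -/
lemma zcol_le_card {k : ℕ} {c : W → ℕ} (h : IsZColoring H k c) :
    k ≤ Fintype.card W := by
  rcases Nat.eq_zero_or_pos k with hk | hk
  · omega
  have hsurj := h.1.1.2.2
  choose f hf using hsurj
  have hmem : ∀ j ∈ Finset.Icc 1 k, j ∈ Set.Icc 1 k := by
    intro j hj; simpa [Set.mem_Icc] using Finset.mem_Icc.mp hj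
  calc k = (Finset.Icc 1 k).card := by rw [Nat.card_Icc]; omega
    _ ≤ Finset.univ.card := by
        classical
        apply Finset.card_le_card_of_injOn
          (fun j => if hj : j ∈ Set.Icc 1 k then f j hj else f 1 ⟨le_refl 1, hk⟩)
        · intro a _; exact Finset.mem_univ _
        · intro a ha b hb hab
          have ha' := hmem a (by simpa using ha)
          have hb' := hmem b (by simpa using hb)
          dsimp only at hab
          rw [dif_pos ha', dif_pos hb'] at hab
          have := hf a ha'
          rw [hab, hf b hb'] at this
          exact this.symm
    _ = Fintype.card W := rfl

lemma exists_ball_zcoloring [Fintype V] (G : SimpleGraph V) {k : ℕ} {c : V → ℕ}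
    (hc : IsZColoring G k c) :
    ∃ u : V, ∃ g : ↥(ball G u ((G.neighborSet u).ncard + 1)) → ℕ,
      IsZColoring (G.induce (ball G u ((G.neighborSet u).ncard + 1))) k g := by
  obtain ⟨⟨⟨hrange, hproper, hsurj⟩, hgrundy⟩, u, hcu, hnice⟩ := hc
  have hc1 : ∀ v, 1 ≤ c v := fun v => (hrange v).1
  have hck : ∀ v, c v ≤ k := fun v => (hrange v).2
  have hk1 : 1 ≤ k := hcu ▸ hc1 u
  set d := (G.neighborSet u).ncard with hd_def
  set B := ball G u (d + 1) with hB_def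
  set H := G.induce B with hH_def
  set c₂ : ↥B → ℕ := fun v => c v.1 with hc2_def
  -- degree bound : k - 1 ≤ d
  have hd : k - 1 ≤ d := by
    have hwit : ∀ j : ℕ, ∃ w, j ∈ Finset.Icc 1 (k-1) → G.Adj u w ∧ c w = j := by
      intro j
      by_cases hj : j ∈ Finset.Icc 1 (k-1)
      · rw [Finset.mem_Icc] at hj
        obtain ⟨w, hw⟩ := hnice.1 j ⟨hj.1, by omega⟩ (by omega)
        exact ⟨w, fun _ => hw⟩
      · exact ⟨u, fun h => absurd h hj⟩
    choose f hf using hwit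
    have : (Finset.Icc 1 (k-1)).card ≤ (G.neighborFinset u).card := by
      apply Finset.card_le_card_of_injOn f
      · intro a ha; exact (G.mem_neighborFinset u (f a)).mpr (hf a ha).1
      · intro a ha b hb hab
        have := (hf a (by simpa using ha)).2
        rw [hab, (hf b (by simpa using hb)).2] at this
        exact this.symm
    have hcard : (G.neighborSet u).ncard = (G.neighborFinset u).card := by
      rw [← Set.ncard_coe_finset]
      congr 1
      simp [Set.ext_iff]
    rw [Nat.card_Icc] at this
    omega
  set g := zgreedy H c₂ with hg_def
  have hadj : ∀ (a b : ↥B), H.Adj a b ↔ G.Adj a.1 b.1 := by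
    intro a b; rw [hH_def]; simp
  -- key induction: vertices reachable with enough slack keep their colors
  have safe_keep : ∀ n (v : V) (p : G.Walk u v), p.length + c v ≤ d + 2 → c v = n →
      ∃ h : v ∈ B, g ⟨v, h⟩ = c v := by
    intro n
    induction n using Nat.strong_induction_on with
    | _ n ih =>
      intro v p hp hv
      have hvB : v ∈ B := ⟨p, by have := hc1 v; omega⟩
      refine ⟨hvB, ?_⟩
      have hle : g ⟨v, hvB⟩ ≤ c₂ ⟨v, hvB⟩ :=
        zgreedy_le H c₂ (fun w => hc1 w.1) _ ⟨v, hvB⟩ rfl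
      rcases lt_or_ge (g ⟨v, hvB⟩) (c v) with hlt | hge
      · exfalso
        have h1 : 1 ≤ g ⟨v, hvB⟩ := zgreedy_pos H c₂ _
        obtain ⟨w, haw, hcw⟩ := hgrundy (g ⟨v, hvB⟩) (c v) h1 hlt (hck v) v rfl
        obtain ⟨hwB, hgw⟩ := ih (g ⟨v, hvB⟩) (hv ▸ hlt) w (p.concat haw)
          (by rw [SimpleGraph.Walk.length_concat]; omega) hcw
        exact zgreedy_not_prev H c₂ ⟨v, hvB⟩ ⟨w, hwB⟩ ((hadj _ _).mpr haw)
          (by simp only [hc2_def]; omega) (hgw.trans hcw)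
      · exact le_antisymm hle hge
  have huB : u ∈ B := ⟨SimpleGraph.Walk.nil, by simp⟩
  have hgu : g ⟨u, huB⟩ = k := by
    obtain ⟨h, hh⟩ := safe_keep (c u) u SimpleGraph.Walk.nil (by simp; omega) rfl
    rw [← hcu]; exact hh
  refine ⟨u, g, ⟨⟨⟨?_, ?_, ?_⟩, ?_⟩, ⟨u, huB⟩, hgu, ?_, ?_⟩⟩
  · -- range
    intro v
    exact ⟨zgreedy_pos H c₂ v, le_trans (zgreedy_le H c₂ (fun w => hc1 w.1) _ v rfl) (hck v.1)⟩
  · -- proper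
    intro a b hab
    have hG : G.Adj a.1 b.1 := (hadj a b).mp hab
    rcases lt_trichotomy (c₂ a) (c₂ b) with h | h | h
    · exact zgreedy_not_prev H c₂ b a hab.symm h
    · exact absurd h (hproper a.1 b.1 hG)
    · exact fun he => zgreedy_not_prev H c₂ a b hab h he.symm
  · -- all colors used
    intro j hj
    rcases eq_or_lt_of_le hj.2 with he | hlt
    · exact ⟨⟨u, huB⟩, by rw [hgu, he]⟩
    · obtain ⟨w, _, _, hgw⟩ := zgreedy_lt_exists H c₂ ⟨u, huB⟩ j hj.1 (by rw [← hg_def]; omega)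
      exact ⟨w, hgw⟩
  · -- Grundy
    intro i j h1 hij hjk v hv
    obtain ⟨w, haw, _, hgw⟩ := zgreedy_lt_exists H c₂ v i h1 (by rw [← hg_def]; omega)
    exact ⟨w, haw, hgw⟩
  · -- b-vertex
    intro j hj hne
    rw [hgu] at hne
    have hjk : j < k := lt_of_le_of_ne hj.2 hne
    obtain ⟨w, haw, hcw⟩ := hnice.1 j hj (by omega)
    obtain ⟨hwB, hgw⟩ := safe_keep (c w) w (SimpleGraph.Walk.cons haw SimpleGraph.Walk.nil)
      (by simp [hcw]; omega) rfl
    exact ⟨⟨w, hwB⟩, (hadj _ _).mpr haw, by rw [hgw, hcw]⟩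
  · -- nice: b-vertex neighbors of each color
    intro j hj hne
    rw [hgu] at hne
    have hjk : j < k := lt_of_le_of_ne hj.2 hne
    obtain ⟨w, haw, hcw, hbw⟩ := hnice.2 j hj (by omega)
    obtain ⟨hwB, hgw⟩ := safe_keep (c w) w (SimpleGraph.Walk.cons haw SimpleGraph.Walk.nil)
      (by simp [hcw]; omega) rfl
    refine ⟨⟨w, hwB⟩, (hadj _ _).mpr haw, by rw [hgw, hcw], ?_⟩
    -- w is a b-vertex of H
    intro i hi hine
    rw [hgw, hcw] at hine
    rcases eq_or_lt_of_le hi.2 with he | hik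
    · refine ⟨⟨u, huB⟩, (hadj _ _).mpr haw.symm, by rw [hgu, he]⟩
    · obtain ⟨x, hax, hcx⟩ := hbw i hi (by rw [hcw]; exact hine)
      obtain ⟨hxB, hgx⟩ := safe_keep (c x) x
        ((SimpleGraph.Walk.cons haw SimpleGraph.Walk.nil).concat hax)
        (by rw [SimpleGraph.Walk.length_concat]; simp [hcx]; omega) rfl
      exact ⟨⟨x, hxB⟩, (hadj _ _).mpr hax, by rw [hgx, hcx]⟩

end greedy

lemma isBVertex_comap {G : SimpleGraph V} {G' : SimpleGraph W} (φ : G ≃g G')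
    {k : ℕ} {c : W → ℕ} {u' : W} (h : IsBVertex G' k c u') :
    IsBVertex G k (c ∘ φ) (φ.symm u') := by
  intro j hj hne
  obtain ⟨w, hw, hcw⟩ := h j hj (by simpa using hne)
  exact ⟨φ.symm w, φ.symm.map_adj_iff.mpr hw, by simpa using hcw⟩

lemma isZColoring_comap {G : SimpleGraph V} {G' : SimpleGraph W} (φ : G ≃g G')
    {k : ℕ} {c : W → ℕ} (h : IsZColoring G' k c) : IsZColoring G k (c ∘ φ) := by
  obtain ⟨⟨⟨hrange, hproper, hsurj⟩, hgrundy⟩, u, hcu, hb, hnb⟩ := h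
  refine ⟨⟨⟨fun v => hrange (φ v), ?_, ?_⟩, ?_⟩, φ.symm u, by simpa using hcu,
    isBVertex_comap φ hb, ?_⟩
  · intro a b hab
    exact hproper (φ a) (φ b) (φ.map_adj_iff.mpr hab)
  · intro j hj
    obtain ⟨v, hv⟩ := hsurj j hj
    exact ⟨φ.symm v, by simpa using hv⟩
  · intro i j h1 hij hjk v hv
    obtain ⟨w, hw, hcw⟩ := hgrundy i j h1 hij hjk (φ v) hv
    exact ⟨φ.symm w, by simpa using φ.symm.map_adj_iff.mpr hw, by simpa using hcw⟩
  · intro j hj hne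
    obtain ⟨w, hw, hcw, hbw⟩ := hnb j hj (by simpa using hne)
    exact ⟨φ.symm w, φ.symm.map_adj_iff.mpr hw, by simpa using hcw, isBVertex_comap φ hbw⟩

lemma zNum_iso {G : SimpleGraph V} {G' : SimpleGraph W} (φ : G ≃g G') :
    zNum G = zNum G' := by
  unfold zNum
  congr 1
  ext k
  exact ⟨fun ⟨c, hc⟩ => ⟨c ∘ φ.symm, isZColoring_comap φ.symm hc⟩,
    fun ⟨c, hc⟩ => ⟨c ∘ φ, isZColoring_comap φ hc⟩⟩

/-- for every finite simple graph `G` with at least one vertex,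
`z(G) ≤ max_{u} z(G⁺(u))` where `G⁺(u) = G[B(u, deg u + 1)]`; moreover, if `G` is
z-monotonic then equality holds. -/
theorem zNum_locality [Fintype V] [Nonempty V] (G : SimpleGraph V) :
    zNum G ≤ (Finset.univ.sup fun u : V =>
        zNum (G.induce (ball G u ((G.neighborSet u).ncard + 1)))) ∧
    ((∀ s₁ s₂ : Set V, s₂ ⊆ s₁ → s₂.Nonempty →
        zNum (G.induce s₂) ≤ zNum (G.induce s₁)) →
      zNum G = Finset.univ.sup fun u : V =>
        zNum (G.induce (ball G u ((G.neighborSet u).ncard + 1)))) := by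
  have hball : ∀ (u : V), u ∈ ball G u ((G.neighborSet u).ncard + 1) :=
    fun u => ⟨SimpleGraph.Walk.nil, by simp⟩
  have h1 : zNum G ≤ (Finset.univ.sup fun u : V =>
      zNum (G.induce (ball G u ((G.neighborSet u).ncard + 1)))) := by
    by_cases hne : {k | ∃ c : V → ℕ, IsZColoring G k c}.Nonempty
    · apply csSup_le hne
      rintro k ⟨c, hc⟩
      obtain ⟨u, g, hg⟩ := exists_ball_zcoloring G hc
      refine le_trans ?_ (Finset.le_sup (Finset.mem_univ u))
      apply le_csSup
      · exact ⟨Fintype.card ↥(ball G u ((G.neighborSet u).ncard + 1)),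
          fun k' ⟨c', hc'⟩ => zcol_le_card _ hc'⟩
      · exact ⟨g, hg⟩
    · rw [Set.not_nonempty_iff_eq_empty] at hne
      simp [zNum, hne]
  refine ⟨h1, fun mono => le_antisymm h1 ?_⟩
  apply Finset.sup_le
  intro u _
  calc zNum (G.induce (ball G u ((G.neighborSet u).ncard + 1)))
      ≤ zNum (G.induce Set.univ) :=
        mono Set.univ _ (Set.subset_univ _) ⟨u, hball u⟩
    _ = zNum G := zNum_iso (SimpleGraph.induceUnivIso G)
end

section
/- For every finite simple graph G with at least one vertex, b*(G) ≤ max_{u ∈ V(G)} b*(G[B(u,2)]), where G[B(u,2)] is the subgraph of G induced by the ball of radius 2 centered at u. -/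
variable {V : Type*} {W : Type*}

lemma bStar_set_bddAbove {W : Type*} [Finite W] (G : SimpleGraph W) :
    BddAbove {k | ∃ c : W → ℕ, IsBStarColoring G k c} := by
  refine ⟨Nat.card W, fun k hk => ?_⟩
  obtain ⟨c, ⟨⟨_, _, hsurj⟩, _⟩⟩ := hk
  choose f hf using hsurj
  have hinj : Function.Injective (fun j : Set.Icc 1 k => f j j.2) := by
    intro a b hab
    have h2 := congrArg c hab
    simp only [hf] at h2
    exact Subtype.ext h2
  have := Nat.card_le_card_of_injective _ hinj
  simpa [Nat.card_Icc] using this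

lemma mem_ball_self {W : Type*} (G : SimpleGraph W) (u : W) (r : ℕ) :
    u ∈ ball G u r := ⟨SimpleGraph.Walk.nil, by simp⟩

lemma mem_ball_adj {W : Type*} {G : SimpleGraph W} {u v : W} (h : G.Adj u v) :
    v ∈ ball G u 2 := ⟨SimpleGraph.Walk.cons h SimpleGraph.Walk.nil, by simp⟩

lemma mem_ball_adj_adj {W : Type*} {G : SimpleGraph W} {u v w : W}
    (h : G.Adj u v) (h' : G.Adj v w) : w ∈ ball G u 2 :=
  ⟨SimpleGraph.Walk.cons h (SimpleGraph.Walk.cons h' SimpleGraph.Walk.nil), by simp⟩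

lemma restrict_bstar {W : Type*} {G : SimpleGraph W} {k : ℕ} {c : W → ℕ} {u : W}
    (hc : IsProperKColoring G k c) (hcu : c u = k) (hu : IsNiceVertex G k c u) :
    IsBStarColoring (G.induce (ball G u 2)) k (fun v => c v.1) := by
  obtain ⟨hmem, hadj, _⟩ := hc
  obtain ⟨hb, hnb⟩ := hu
  have hub : u ∈ ball G u 2 := mem_ball_self G u 2
  refine ⟨⟨fun v => hmem v.1, fun a b hab => hadj a.1 b.1 hab, ?_⟩,
    ⟨u, hub⟩, hcu, ?_, ?_⟩
  · -- all colors used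
    intro j hj
    by_cases hjk : j = c u
    · exact ⟨⟨u, hub⟩, hjk.symm⟩
    · obtain ⟨w, hw, hcw⟩ := hb j hj hjk
      exact ⟨⟨w, mem_ball_adj hw⟩, hcw⟩
  · -- u is a b-vertex in the induced graph
    intro j hj hjk
    obtain ⟨w, hw, hcw⟩ := hb j hj hjk
    exact ⟨⟨w, mem_ball_adj hw⟩, hw, hcw⟩
  · -- b-vertex neighbors
    intro j hj hjk
    obtain ⟨w, hw, hcw, hwb⟩ := hnb j hj hjk
    refine ⟨⟨w, mem_ball_adj hw⟩, hw, hcw, ?_⟩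
    intro i hi hicw
    obtain ⟨x, hx, hcx⟩ := hwb i hi hicw
    exact ⟨⟨x, mem_ball_adj_adj hw hx⟩, hx, hcx⟩

/-- for every finite simple graph `G` with at least one vertex,
`b*(G) ≤ max_{u} b*(G[B(u,2)])`. -/
theorem bStar_locality [Fintype V] [Nonempty V] (G : SimpleGraph V) :
    bStar G ≤ Finset.univ.sup fun u : V => bStar (G.induce (ball G u 2)) := by
  refine csSup_le' ?_
  rintro k ⟨c, hc, u, hcu, hu⟩
  have hk : k ≤ bStar (G.induce (ball G u 2)) :=
    le_csSup (bStar_set_bddAbove _) ⟨_, restrict_bstar hc hcu hu⟩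
  exact hk.trans (Finset.le_sup (f := fun u : V => bStar (G.induce (ball G u 2))) (Finset.mem_univ u))
end
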